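/- arXiv:math/0410357 — 4 statements merged into one kernel-verified Lean document; each statement's English description precedes it below -/
import Mathlib

section
/- If C is a π-system in a root system R (i.e., a linearly independent set of roots such that the difference of any two elements of C is not a root), then the set [C] of roots of R that are integer linear combinations of elements of C is itself a root system (in the span of C) having C as a base. -/
open scoped RealInnerProductSpace

variable {V : Type*} [NormedAddCommGroup V] [InnerProductSpace ℝ V] [FiniteDimensional ℝ V]

/-- A (reduced, crystallographic) root system in the span of `R`. -/
def IsRootSystemIn (R : Set V) : Prop :=
  R.Finite ∧ (0 : V) ∉ R ∧
  (∀ α ∈ R, ∀ β ∈ R, β - (2 * ⟪β, α⟫ / ⟪α, α⟫) • α ∈ R) ∧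
  (∀ α ∈ R, ∀ β ∈ R, ∃ k : ℤ, 2 * ⟪β, α⟫ / ⟪α, α⟫ = (k : ℝ)) ∧
  (∀ α ∈ R, ∀ t : ℝ, t • α ∈ R → t = 1 ∨ t = -1)

/-- A root system in the ambient space `V`. -/
def IsRootSystem (R : Set V) : Prop :=
  IsRootSystemIn R ∧ Submodule.span ℝ R = ⊤

/-- `B` is a base of the root system `R`: a linearly independent subset spanning the span
of `R` such that every root is a `ℤ`-linear combination of `B` with coefficients
all nonnegative or all nonpositive. -/
def IsBaseOf (R B : Set V) : Prop :=
  B ⊆ R ∧ LinearIndependent ℝ ((↑) : B → V) ∧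
  Submodule.span ℝ B = Submodule.span ℝ R ∧
  ∀ r ∈ R, ∃ c : V →₀ ℤ, (c.support : Set V) ⊆ B ∧
    r = c.sum (fun v n => n • v) ∧ ((∀ v, 0 ≤ c v) ∨ (∀ v, c v ≤ 0))

/-- A π-system in `R`: a linearly independent set of roots whose pairwise
differences are not roots. -/
def IsPiSystemIn (R C : Set V) : Prop :=
  C ⊆ R ∧ LinearIndependent ℝ ((↑) : C → V) ∧
  ∀ α ∈ C, ∀ β ∈ C, α - β ∉ R

/-- `[C]`: the set of roots of `R` that are `ℤ`-linear combinations of elements of `C`. -/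
def zClosure (R C : Set V) : Set V :=
  {r ∈ R | r ∈ (Submodule.span ℤ C : Set V)}

set_option linter.unusedSectionVars false

section Aux
variable {R C : Set V}

variable {R C : Set V}

lemma rs_inner_self_pos {x : V} (hx : x ≠ 0) : (0:ℝ) < ⟪x, x⟫ :=
  lt_of_le_of_ne real_inner_self_nonneg (fun h => hx (inner_self_eq_zero.mp h.symm))

lemma rs_neg_mem (hR : IsRootSystemIn R) {α : V} (hα : α ∈ R) : -α ∈ R := by
  have h0 : α ≠ 0 := fun h => hR.2.1 (h ▸ hα)
  have ha : ⟪α, α⟫ ≠ 0 := ne_of_gt (rs_inner_self_pos h0)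
  have h := hR.2.2.1 α hα α hα
  rwa [show (2 * ⟪α,α⟫ / ⟪α,α⟫ : ℝ) = 2 by field_simp,
    show α - (2:ℝ) • α = -α by module] at h

lemma rs_sub_mem (hR : IsRootSystemIn R) {α β : V} (hα : α ∈ R) (hβ : β ∈ R)
    (hpos : 0 < ⟪α, β⟫) (hne : α ≠ β) : α - β ∈ R := by
  have h0α : α ≠ 0 := fun h => hR.2.1 (h ▸ hα)
  have h0β : β ≠ 0 := fun h => hR.2.1 (h ▸ hβ)
  have haa : (0:ℝ) < ⟪α, α⟫ := rs_inner_self_pos h0α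
  have hbb : (0:ℝ) < ⟪β, β⟫ := rs_inner_self_pos h0β
  obtain ⟨k, hk⟩ := hR.2.2.2.1 β hβ α hα
  obtain ⟨l, hl⟩ := hR.2.2.2.1 α hα β hβ
  have hba : ⟪β, α⟫ = ⟪α, β⟫ := real_inner_comm _ _
  rw [hba] at hl
  have hrefβ := hR.2.2.1 β hβ α hα
  have hrefα := hR.2.2.1 α hα β hβ
  rw [hba] at hrefα
  have hk1 : 1 ≤ k := by
    have : (0:ℝ) < (k:ℝ) := hk ▸ div_pos (by linarith) hbb
    exact_mod_cast this
  have hl1 : 1 ≤ l := by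
    have : (0:ℝ) < (l:ℝ) := hl ▸ div_pos (by linarith) haa
    exact_mod_cast this
  have hcs : ⟪α, β⟫ * ⟪α, β⟫ ≤ ⟪α, α⟫ * ⟪β, β⟫ := real_inner_mul_inner_self_le α β
  have hkl : k * l ≤ 4 := by
    have h4 : (k:ℝ) * (l:ℝ) ≤ 4 := by
      rw [← hk, ← hl]
      rw [div_mul_div_comm, div_le_iff₀ (by positivity)]
      ring_nf
      nlinarith
    exact_mod_cast h4
  by_cases hkone : k = 1
  · rw [hkone] at hk
    rwa [hk, Int.cast_one, one_smul] at hrefβ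
  by_cases hlone : l = 1
  · rw [hlone] at hl
    rw [hl, Int.cast_one, one_smul] at hrefα
    have := rs_neg_mem hR hrefα
    rwa [neg_sub] at this
  · exfalso
    have h2k : 2 ≤ k := by omega
    have h2l : 2 ≤ l := by omega
    have hk2' : k ≤ 2 := by nlinarith
    have hl2' : l ≤ 2 := by nlinarith
    have hk2 : k = 2 := by omega
    have hl2 : l = 2 := by omega
    rw [hk2] at hk; rw [hl2] at hl
    have hab : ⟪α, β⟫ = ⟪β, β⟫ := by
      field_simp at hk; push_cast at hk; linarith
    have hab' : ⟪α, β⟫ = ⟪α, α⟫ := by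
      field_simp at hl; push_cast at hl; linarith
    have : ⟪α - β, α - β⟫ = 0 := by
      rw [real_inner_sub_sub_self]; linarith
    exact hne (by have := inner_self_eq_zero.mp this; rwa [sub_eq_zero] at this)

lemma comb_eq_zero (hli : LinearIndependent ℝ ((↑) : C → V)) (S : Finset V) (hS : ↑S ⊆ C)
    (g : V → ℝ) (h : ∑ v ∈ S, g v • v = 0) : ∀ v ∈ S, g v = 0 := by
  classical
  have hli' := linearIndepOn_iff.mp (linearIndependent_subtype_iff.mp hli)
  set l : V →₀ ℝ := ∑ v ∈ S, Finsupp.single v (g v) with hl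
  have hlsupp : l ∈ Finsupp.supported ℝ ℝ C := by
    rw [Finsupp.mem_supported]
    refine Set.Subset.trans ?_ hS
    intro x hx
    simp only [Finset.mem_coe]
    by_contra hxS
    have : l x = 0 := by
      rw [hl, Finset.sum_apply']
      apply Finset.sum_eq_zero
      intro v hv
      rw [Finsupp.single_apply, if_neg]
      rintro rfl; exact hxS hv
    exact (Finsupp.mem_support_iff.mp hx) this
  have hltot : (Finsupp.linearCombination ℝ id) l = 0 := by
    rw [hl, map_sum]
    rw [← h]
    apply Finset.sum_congr rfl
    intro v hv
    simp [Finsupp.linearCombination_single]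
  have hl0 := hli' l hlsupp hltot
  intro v hv
  have : l v = g v := by
    rw [hl, Finset.sum_apply']
    rw [Finset.sum_congr rfl (fun u _ => Finsupp.single_apply (a := u) (a' := v) (b := g u))]
    rw [Finset.sum_ite_eq' S v g]  -- careful: condition orientation
    exact if_pos hv
  rw [hl0] at this
  simpa using this.symm


lemma obtuse (hR : IsRootSystemIn R) (hC : IsPiSystemIn R C) {u v : V}
    (hu : u ∈ C) (hv : v ∈ C) (huv : u ≠ v) : ⟪u, v⟫ ≤ 0 := by
  by_contra h
  push_neg at h
  exact hC.2.2 u hu v hv (rs_sub_mem hR (hC.1 hu) (hC.1 hv) h huv)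

lemma zsum_eq_real (c : V →₀ ℤ) :
    (c.sum fun v k => k • v) = ∑ v ∈ c.support, ((c v : ℝ)) • v := by
  rw [Finsupp.sum]
  exact Finset.sum_congr rfl fun v _ => (Int.cast_smul_eq_zsmul ℝ (c v) v).symm

lemma zfinsupp_eq_zero (hli : LinearIndependent ℝ ((↑) : C → V)) (d : V →₀ ℤ)
    (hd : ↑d.support ⊆ C) (h0 : (d.sum fun v k => k • v) = 0) : d = 0 := by
  have h := comb_eq_zero hli d.support hd (fun v => ((d v : ℝ)))
    (by rw [← zsum_eq_real, h0])
  ext v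
  by_cases hv : v ∈ d.support
  · have h2 : ((d v : ℤ) : ℝ) = 0 := h v hv
    exact_mod_cast h2
  · simpa using Finsupp.notMem_support_iff.mp hv

lemma key (hR : IsRootSystemIn R) (hC : IsPiSystemIn R C) :
    ∀ n : ℕ, ∀ c : V →₀ ℤ, (c.sum fun _ k => k.natAbs) = n →
      ↑c.support ⊆ C → (c.sum fun v k => k • v) ∈ R →
      (∀ v, 0 ≤ c v) ∨ (∀ v, c v ≤ 0) := by
  classical
  intro n
  induction n using Nat.strong_induction_on with
  | _ n IH =>
  intro c hn hsupp hmem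
  by_contra hcon
  push_neg at hcon
  obtain ⟨⟨j₀, hj₀⟩, ⟨i₀, hi₀⟩⟩ := hcon
  set r : V := c.sum fun v k => k • v with hrdef
  set P : Finset V := c.support.filter (fun v => 0 < c v) with hP
  set Q : Finset V := c.support.filter (fun v => ¬ 0 < c v) with hQ
  have hQneg : ∀ v ∈ Q, c v < 0 := by
    intro v hv
    rw [hQ, Finset.mem_filter] at hv
    have := Finsupp.mem_support_iff.mp hv.1
    omega
  have hPpos : ∀ v ∈ P, 0 < c v := by
    intro v hv; rw [hP, Finset.mem_filter] at hv; exact hv.2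
  have hPC : ∀ v ∈ P, v ∈ C := fun v hv => hsupp (Finset.mem_coe.mpr (Finset.filter_subset _ _ hv))
  have hQC : ∀ v ∈ Q, v ∈ C := fun v hv => hsupp (Finset.mem_coe.mpr (Finset.filter_subset _ _ hv))
  have hsplit : P ∪ Q = c.support := Finset.filter_union_filter_not_eq _ _
  have hdisj : Disjoint P Q := Finset.disjoint_filter_filter_not _ _ _
  have hi₀P : i₀ ∈ P := by
    rw [hP, Finset.mem_filter, Finsupp.mem_support_iff]; exact ⟨by omega, hi₀⟩
  have hj₀Q : j₀ ∈ Q := by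
    rw [hQ, Finset.mem_filter, Finsupp.mem_support_iff]; exact ⟨by omega, by omega⟩
  set p : V := ∑ v ∈ P, ((c v : ℝ)) • v with hp
  set q : V := -∑ v ∈ Q, ((c v : ℝ)) • v with hq
  have hrpq : r = p - q := by
    rw [hrdef, zsum_eq_real, ← hsplit, Finset.sum_union hdisj, hp, hq, sub_neg_eq_add]
  have hpne : p ≠ 0 := by
    intro h
    have := comb_eq_zero hC.2.1 P (fun v hv => hPC v hv) (fun v => ((c v : ℝ))) (by rw [← hp, h]) i₀ hi₀P
    have h2 : ((c i₀ : ℤ) : ℝ) = 0 := this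
    have : c i₀ = 0 := by exact_mod_cast h2
    omega
  have hqne : q ≠ 0 := by
    intro h
    have h' : ∑ v ∈ Q, ((c v : ℝ)) • v = 0 := by
      have := hq ▸ h; simpa [neg_eq_zero] using this
    have := comb_eq_zero hC.2.1 Q (fun v hv => hQC v hv) (fun v => ((c v : ℝ))) h' j₀ hj₀Q
    have h2 : ((c j₀ : ℤ) : ℝ) = 0 := this
    have : c j₀ = 0 := by exact_mod_cast h2
    omega
  have hpq : ⟪p, q⟫ ≤ 0 := by
    rw [hp, hq, inner_neg_right, sum_inner]
    rw [neg_nonpos]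
    -- goal : 0 ≤ ∑ u in P, ⟪(c u:ℝ) • u, ∑ v in Q, (c v:ℝ) • v⟫
    apply Finset.sum_nonneg
    intro u hu
    rw [inner_sum]
    apply Finset.sum_nonneg
    intro v hv
    rw [real_inner_smul_left, real_inner_smul_right]
    have h1 : (0:ℝ) < (c u : ℝ) := by exact_mod_cast hPpos u hu
    have h2 : (c v : ℝ) < 0 := by exact_mod_cast hQneg v hv
    have huv : u ≠ v := by
      intro h; rw [h] at h1; exact absurd (h1.trans h2) (lt_irrefl _)
    have h3 : ⟪u, v⟫ ≤ 0 := obtuse hR hC (hPC u hu) (hQC v hv) huv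
    have h4 : 0 ≤ (c v:ℝ) * ⟪u, v⟫ := by nlinarith
    exact mul_nonneg h1.le h4
  have hpp : (0:ℝ) < ⟪p,p⟫ := rs_inner_self_pos hpne
  have hqq : (0:ℝ) < ⟪q,q⟫ := rs_inner_self_pos hqne
  have hqp : ⟪q,p⟫ = ⟪p,q⟫ := real_inner_comm _ _
  have hrp : (0:ℝ) < ⟪r,p⟫ := by rw [hrpq, inner_sub_left]; linarith
  have hrq : ⟪r,q⟫ < 0 := by rw [hrpq, inner_sub_left]; linarith
  obtain ⟨i, hiP, hi⟩ : ∃ i ∈ P, 0 < (c i : ℝ) * ⟪r, i⟫ := by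
    by_contra hcon2
    push_neg at hcon2
    have hle : ⟪r, p⟫ ≤ 0 := by
      rw [hp, inner_sum]
      apply Finset.sum_nonpos
      intro v hv
      rw [real_inner_smul_right]
      exact hcon2 v hv
    linarith
  obtain ⟨j, hjQ, hj⟩ : ∃ j ∈ Q, 0 < (c j : ℝ) * ⟪r, j⟫ := by
    by_contra hcon2
    push_neg at hcon2
    have hle : (0:ℝ) ≤ ⟪r, q⟫ := by
      rw [hq, inner_neg_right, neg_nonneg]
      rw [inner_sum]
      apply Finset.sum_nonpos
      intro v hv
      rw [real_inner_smul_right]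
      exact hcon2 v hv
    linarith
  have hcip : (0:ℝ) < (c i : ℝ) := by exact_mod_cast hPpos i hiP
  have hcjn : ((c j : ℝ)) < 0 := by exact_mod_cast hQneg j hjQ
  have hri : (0:ℝ) < ⟪r, i⟫ := by nlinarith
  have hrj : ⟪r, j⟫ < 0 := by nlinarith
  have hij : i ≠ j := by
    intro h; rw [h] at hcip; linarith
  have hiC : i ∈ C := hPC i hiP
  have hjC : j ∈ C := hQC j hjQ
  have hci1' : 1 ≤ c i := hPpos i hiP
  have hcj1' : c j ≤ -1 := by have := hQneg j hjQ; omega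
  -- step 1 : subtract i
  set c₁ : V →₀ ℤ := c - Finsupp.single i (1:ℤ) with hc₁def
  have hsub : ∀ (a : V) (b₁ b₂ : ℤ), (b₁ - b₂) • a = b₁ • a - b₂ • a :=
    fun a b₁ b₂ => sub_smul b₁ b₂ a
  have hc₁sum : (c₁.sum fun v k => k • v) = r - i := by
    rw [hc₁def, Finsupp.sum_sub_index hsub, Finsupp.sum_single_index (zero_smul ℤ i),
      one_smul, ← hrdef]
  have hc₁j : c₁ j = c j := by
    rw [hc₁def, Finsupp.sub_apply, Finsupp.single_apply, if_neg (fun h => hij h), sub_zero]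
  have hc₁i : c₁ i = c i - 1 := by
    rw [hc₁def, Finsupp.sub_apply, Finsupp.single_apply, if_pos rfl]
  have hc₁supp : ↑c₁.support ⊆ C := by
    intro x hx
    have hx' := Finsupp.support_sub (Finset.mem_coe.mp hx)
    rcases Finset.mem_union.mp hx' with h | h
    · exact hsupp h
    · have hx2 := Finsupp.support_single_subset h
      rw [Finset.mem_singleton] at hx2
      rw [hx2]; exact hiC
  have hrnei : r ≠ i := by
    intro h
    have h0 : (c₁.sum fun v k => k • v) = 0 := by rw [hc₁sum, h, sub_self]
    have hz := zfinsupp_eq_zero hC.2.1 c₁ hc₁supp h0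
    have : c₁ j = 0 := by rw [hz]; rfl
    rw [hc₁j] at this
    omega
  have hri_mem : r - i ∈ R := rs_sub_mem hR hmem (hC.1 hiC) hri hrnei
  have hwc₁ : (c₁.sum fun _ k => k.natAbs) + 1 = n := by
    set S := insert i c.support with hS
    have hcS : c.support ⊆ S := Finset.subset_insert _ _
    have hc₁S : c₁.support ⊆ S := by
      intro x hx
      have hx' := Finsupp.support_sub hx
      rcases Finset.mem_union.mp hx' with h | h
      · exact Finset.mem_insert_of_mem h
      · have hx2 := Finsupp.support_single_subset h
        rw [Finset.mem_singleton] at hx2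
        rw [hx2]; exact Finset.mem_insert_self _ _
    have h1 : (c.sum fun _ k => k.natAbs) = ∑ v ∈ S, (c v).natAbs :=
      Finsupp.sum_of_support_subset c hcS _ (fun _ _ => rfl)
    have h2 : (c₁.sum fun _ k => k.natAbs) = ∑ v ∈ S, (c₁ v).natAbs :=
      Finsupp.sum_of_support_subset c₁ hc₁S _ (fun _ _ => rfl)
    have hiS : i ∈ S := Finset.mem_insert_self _ _
    rw [h2, ← hn, h1, ← Finset.sum_erase_add S _ hiS,
      ← Finset.sum_erase_add S (fun v => (c v).natAbs) hiS]
    have he : ∑ v ∈ S.erase i, (c₁ v).natAbs = ∑ v ∈ S.erase i, (c v).natAbs := by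
      apply Finset.sum_congr rfl
      intro v hv
      have hvi : v ≠ i := Finset.ne_of_mem_erase hv
      rw [hc₁def, Finsupp.sub_apply, Finsupp.single_apply, if_neg (fun h => hvi h.symm), sub_zero]
    rw [he, hc₁i]
    omega
  have hsign₁ := IH (c₁.sum fun _ k => k.natAbs) (by omega) c₁ rfl hc₁supp
    (by rw [hc₁sum]; exact hri_mem)
  have hneg₁ : ∀ v, c₁ v ≤ 0 := by
    rcases hsign₁ with h | h
    · exfalso; have := h j; rw [hc₁j] at this; omega
    · exact h
  have hci1 : c i = 1 := by have := hneg₁ i; rw [hc₁i] at this; omega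
  have hvle : ∀ v, v ≠ i → c v ≤ 0 := by
    intro v hv
    have := hneg₁ v
    rwa [hc₁def, Finsupp.sub_apply, Finsupp.single_apply, if_neg (fun h => hv h.symm),
      sub_zero] at this
  -- step 2 : add j
  set c₂ : V →₀ ℤ := c + Finsupp.single j (1:ℤ) with hc₂def
  have hc₂sum : (c₂.sum fun v k => k • v) = r + j := by
    rw [hc₂def, Finsupp.sum_add_index' (fun a => zero_smul ℤ a)
      (fun a b₁ b₂ => add_smul b₁ b₂ a), Finsupp.sum_single_index (zero_smul ℤ j),
      one_smul, ← hrdef]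
  have hc₂i : c₂ i = c i := by
    rw [hc₂def, Finsupp.add_apply, Finsupp.single_apply, if_neg (fun h => hij h.symm), add_zero]
  have hc₂j : c₂ j = c j + 1 := by
    rw [hc₂def, Finsupp.add_apply, Finsupp.single_apply, if_pos rfl]
  have hc₂supp : ↑c₂.support ⊆ C := by
    intro x hx
    have hx' := Finsupp.support_add (Finset.mem_coe.mp hx)
    rcases Finset.mem_union.mp hx' with h | h
    · exact hsupp h
    · have hx2 := Finsupp.support_single_subset h
      rw [Finset.mem_singleton] at hx2
      rw [hx2]; exact hjC
  have hnegr : -r ∈ R := rs_neg_mem hR hmem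
  have hrnej : -r ≠ j := by
    intro h
    have h0 : (c₂.sum fun v k => k • v) = 0 := by
      rw [hc₂sum, ← h]; abel
    have hz := zfinsupp_eq_zero hC.2.1 c₂ hc₂supp h0
    have : c₂ i = 0 := by rw [hz]; rfl
    rw [hc₂i] at this
    omega
  have hinnernr : (0:ℝ) < ⟪-r, j⟫ := by rw [inner_neg_left]; linarith
  have hsub_mem := rs_sub_mem hR hnegr (hC.1 hjC) hinnernr hrnej
  have hrj_mem : r + j ∈ R := by
    have := rs_neg_mem hR hsub_mem
    rwa [show -(-r - j) = r + j by abel] at this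
  have hwc₂ : (c₂.sum fun _ k => k.natAbs) + 1 = n := by
    set S := insert j c.support with hS
    have hcS : c.support ⊆ S := Finset.subset_insert _ _
    have hc₂S : c₂.support ⊆ S := by
      intro x hx
      have hx' := Finsupp.support_add hx
      rcases Finset.mem_union.mp hx' with h | h
      · exact Finset.mem_insert_of_mem h
      · have hx2 := Finsupp.support_single_subset h
        rw [Finset.mem_singleton] at hx2
        rw [hx2]; exact Finset.mem_insert_self _ _
    have h1 : (c.sum fun _ k => k.natAbs) = ∑ v ∈ S, (c v).natAbs :=
      Finsupp.sum_of_support_subset c hcS _ (fun _ _ => rfl)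
    have h2 : (c₂.sum fun _ k => k.natAbs) = ∑ v ∈ S, (c₂ v).natAbs :=
      Finsupp.sum_of_support_subset c₂ hc₂S _ (fun _ _ => rfl)
    have hjS : j ∈ S := Finset.mem_insert_self _ _
    rw [h2, ← hn, h1, ← Finset.sum_erase_add S _ hjS,
      ← Finset.sum_erase_add S (fun v => (c v).natAbs) hjS]
    have he : ∑ v ∈ S.erase j, (c₂ v).natAbs = ∑ v ∈ S.erase j, (c v).natAbs := by
      apply Finset.sum_congr rfl
      intro v hv
      have hvj : v ≠ j := Finset.ne_of_mem_erase hv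
      rw [hc₂def, Finsupp.add_apply, Finsupp.single_apply, if_neg (fun h => hvj h.symm), add_zero]
    rw [he, hc₂j]
    omega
  have hsign₂ := IH (c₂.sum fun _ k => k.natAbs) (by omega) c₂ rfl hc₂supp
    (by rw [hc₂sum]; exact hrj_mem)
  have hpos₂ : ∀ v, 0 ≤ c₂ v := by
    rcases hsign₂ with h | h
    · exact h
    · exfalso; have := h i; rw [hc₂i] at this; omega
  have hcjm1 : c j = -1 := by have := hpos₂ j; rw [hc₂j] at this; omega
  have hvge : ∀ v, v ≠ j → 0 ≤ c v := by
    intro v hv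
    have := hpos₂ v
    rwa [hc₂def, Finsupp.add_apply, Finsupp.single_apply, if_neg (fun h => hv h.symm),
      add_zero] at this
  -- conclude r = i - j
  have hcform : c = Finsupp.single i (1:ℤ) - Finsupp.single j (1:ℤ) := by
    ext v
    rw [Finsupp.sub_apply, Finsupp.single_apply, Finsupp.single_apply]
    by_cases hvi : v = i
    · subst hvi
      rw [if_pos rfl, if_neg (fun h => hij h.symm)]
      omega
    · by_cases hvj : v = j
      · subst hvj
        rw [if_neg (fun h => hvi h.symm), if_pos rfl]
        omega
      · rw [if_neg (fun h => hvi h.symm), if_neg (fun h => hvj h.symm)]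
        have := hvle v (fun h => hvi h)
        have := hvge v (fun h => hvj h)
        omega
  have hrij : r = i - j := by
    rw [hrdef, hcform, Finsupp.sum_sub_index hsub,
      Finsupp.sum_single_index (zero_smul ℤ i), Finsupp.sum_single_index (zero_smul ℤ j),
      one_smul, one_smul]
  exact hC.2.2 i hiC j hjC (hrij ▸ hmem)


end Aux

/-- If `C` is a π-system in a root system `R`, then `[C]` is a root
system in the span of `C` having `C` as a base. -/
theorem zClosure_of_piSystem_isRootSystem (R C : Set V)
    (hR : IsRootSystem R) (hC : IsPiSystemIn R C) :
    IsRootSystemIn (zClosure R C) ∧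
    Submodule.span ℝ (zClosure R C) = Submodule.span ℝ C ∧
    IsBaseOf (zClosure R C) C := by
  obtain ⟨hR', hspanR⟩ := hR
  have hsub : zClosure R C ⊆ R := fun x hx => hx.1
  have hCz : C ⊆ zClosure R C := fun x hx => ⟨hC.1 hx, Submodule.subset_span hx⟩
  have hrs : IsRootSystemIn (zClosure R C) := by
    refine ⟨hR'.1.subset hsub, fun h => hR'.2.1 h.1, ?_, ?_, ?_⟩
    · intro α hα β hβ
      refine ⟨hR'.2.2.1 α hα.1 β hβ.1, ?_⟩
      obtain ⟨k, hk⟩ := hR'.2.2.2.1 α hα.1 β hβ.1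
      rw [hk, Int.cast_smul_eq_zsmul]
      exact Submodule.sub_mem _ hβ.2 (Submodule.smul_mem _ k hα.2)
    · intro α hα β hβ
      exact hR'.2.2.2.1 α hα.1 β hβ.1
    · intro α hα t ht
      exact hR'.2.2.2.2 α hα.1 t ht.1
  have hspan : Submodule.span ℝ (zClosure R C) = Submodule.span ℝ C := by
    apply le_antisymm
    · rw [Submodule.span_le]
      intro x hx
      exact Submodule.span_subset_span ℤ ℝ _ hx.2
    · exact Submodule.span_mono hCz
  refine ⟨hrs, hspan, hCz, hC.2.1, hspan.symm, ?_⟩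
  intro r hr
  obtain ⟨c, hc1, hc2⟩ := Submodule.mem_span_set.mp hr.2
  exact ⟨c, hc1, hc2.symm, key hR' hC _ c rfl hc1 (by rw [hc2]; exact hr.1)⟩
end

section
/- Let R be a root system in V, V′ a subspace of V, and R′ = R ∩ V′. If C is a base of the root system R′, then C can be extended to a base B of R (i.e., there exists a base B of R with C ⊆ B). -/
open scoped RealInnerProductSpace
set_option linter.unusedSectionVars false

variable {V : Type*} [NormedAddCommGroup V] [InnerProductSpace ℝ V] [FiniteDimensional ℝ V]

lemma RS.neg_mem {R : Set V} (hR : IsRootSystemIn R) {α : V} (hα : α ∈ R) : -α ∈ R := by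
  have h := hR.2.2.1 α hα α hα
  have hne : ⟪α, α⟫ ≠ 0 := by
    intro h0
    exact hR.2.1 (by simpa [inner_self_eq_zero.mp h0] using hα)
  have h2 : (2 * ⟪α, α⟫ / ⟪α, α⟫ : ℝ) = 2 := by field_simp
  rw [h2] at h
  have h3 : α - (2:ℝ) • α = -α := by rw [two_smul]; abel
  rwa [h3] at h

lemma RS.sub_mem_of_inner_pos {R : Set V} (hR : IsRootSystemIn R) {α β : V}
    (hα : α ∈ R) (hβ : β ∈ R) (hne : α ≠ β) (hip : 0 < ⟪α, β⟫) : α - β ∈ R := by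
  have h0 : (0:V) ∉ R := hR.2.1
  have hα0 : α ≠ 0 := fun h => h0 (h ▸ hα)
  have hβ0 : β ≠ 0 := fun h => h0 (h ▸ hβ)
  have hαα : (0:ℝ) < ⟪α, α⟫ :=
    lt_of_le_of_ne real_inner_self_nonneg (Ne.symm fun h => hα0 (inner_self_eq_zero.mp h))
  have hββ : (0:ℝ) < ⟪β, β⟫ :=
    lt_of_le_of_ne real_inner_self_nonneg (Ne.symm fun h => hβ0 (inner_self_eq_zero.mp h))
  have hprop : ∀ t : ℝ, β ≠ t • α := by
    intro t ht
    have hmem : t • α ∈ R := by rw [← ht]; exact hβ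
    rcases hR.2.2.2.2 α hα t hmem with h1 | h1
    · rw [h1, one_smul] at ht; exact hne ht.symm
    · rw [h1] at ht
      rw [ht] at hip
      simp only [neg_smul, one_smul, inner_neg_right] at hip
      nlinarith
  obtain ⟨k₁, hk₁⟩ := hR.2.2.2.1 α hα β hβ
  obtain ⟨k₂, hk₂⟩ := hR.2.2.2.1 β hβ α hα
  have hsymm : ⟪β, α⟫ = ⟪α, β⟫ := real_inner_comm α β
  have hcs : ⟪α, β⟫ ^ 2 < ⟪α, α⟫ * ⟪β, β⟫ := by
    rcases lt_or_eq_of_le (abs_real_inner_le_norm α β) with h | h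
    · have e1 := real_inner_self_eq_norm_mul_norm α
      have e2 := real_inner_self_eq_norm_mul_norm β
      nlinarith [norm_nonneg α, norm_nonneg β, abs_nonneg ⟪α,β⟫, sq_abs ⟪α,β⟫,
        le_abs_self ⟪α,β⟫]
    · exfalso
      have h' : ⟪α, β⟫ = ‖α‖ * ‖β‖ := by rw [← abs_of_pos hip]; exact h
      rw [inner_eq_norm_mul_iff_real] at h'
      have hnb : ‖α‖ ≠ 0 := norm_ne_zero_iff.mpr hα0
      exact hprop (‖β‖ / ‖α‖) (by
        rw [div_eq_mul_inv, mul_comm, mul_smul, h', smul_smul, inv_mul_cancel₀ hnb, one_smul])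
  have hk₁pos : 0 < k₁ := by
    have : (0:ℝ) < k₁ := by rw [← hk₁, hsymm]; exact div_pos (by linarith) hαα
    exact_mod_cast this
  have hk₂pos : 0 < k₂ := by
    have : (0:ℝ) < k₂ := by rw [← hk₂]; exact div_pos (by linarith) hββ
    exact_mod_cast this
  have hprod : k₁ * k₂ < 4 := by
    have h4 : ((k₁ : ℝ)) * (k₂ : ℝ) < 4 := by
      rw [← hk₁, ← hk₂, hsymm, div_mul_div_comm]
      rw [div_lt_iff₀ (by positivity)]
      nlinarith
    exact_mod_cast h4
  have hone : k₁ = 1 ∨ k₂ = 1 := by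
    by_contra hcon
    push_neg at hcon
    have e1 : 2 ≤ k₁ := by omega
    have e2 : 2 ≤ k₂ := by omega
    nlinarith
  rcases hone with h1 | h1
  · have h := hR.2.2.1 α hα β hβ
    rw [hk₁, h1] at h
    simp only [Int.cast_one, one_smul] at h
    have := RS.neg_mem hR h
    simpa using this
  · have h := hR.2.2.1 β hβ α hα
    rw [hk₂, h1] at h
    simpa using h

lemma RS.linearIndependent_of_pos_of_inner_nonpos {S : Set V} (f : V →ₗ[ℝ] ℝ)
    (hpos : ∀ v ∈ S, 0 < f v)
    (hin : ∀ u ∈ S, ∀ v ∈ S, u ≠ v → ⟪u, v⟫ ≤ 0) :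
    LinearIndependent ℝ ((↑) : S → V) := by
  rw [linearIndependent_iff']
  intro s g hsum i hi
  classical
  set t := s.filter (fun i => 0 < g i) with ht
  set u := s.filter (fun i => ¬ 0 < g i) with hu
  set w := ∑ i ∈ t, g i • (i : V) with hw
  have hsplit : ∑ i ∈ t, g i • (i:V) + ∑ i ∈ u, g i • (i:V) = 0 := by
    rw [Finset.sum_filter_add_sum_filter_not]; exact hsum
  have hw2 : w = ∑ j ∈ u, (-g j) • (j : V) := by
    have h := eq_neg_of_add_eq_zero_left hsplit
    rw [hw, h, ← Finset.sum_neg_distrib]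
    exact Finset.sum_congr rfl fun j _ => (neg_smul _ _).symm
  have hww : ⟪w, w⟫ ≤ 0 := by
    have hrw : ⟪w, w⟫ = ⟪∑ i ∈ t, g i • (i : V), ∑ j ∈ u, (-g j) • (j : V)⟫ :=
      congrArg₂ (fun a b => (⟪a, b⟫ : ℝ)) hw hw2
    rw [hrw, sum_inner]
    apply Finset.sum_nonpos
    intro i hit
    rw [inner_sum]
    apply Finset.sum_nonpos
    intro j hju
    rw [real_inner_smul_left, real_inner_smul_right]
    have hgi : 0 < g i := (Finset.mem_filter.mp hit).2
    have hgj : ¬ 0 < g j := (Finset.mem_filter.mp hju).2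
    have hij : (i : V) ≠ (j : V) := by
      intro hcontra
      have : i = j := Subtype.coe_injective hcontra
      exact hgj (this ▸ hgi)
    have := hin i i.2 j j.2 hij
    have h1 : 0 ≤ -g j := by linarith
    have h2 : g i * (-g j * ⟪(i:V), (j:V)⟫) ≤ 0 :=
      mul_nonpos_of_nonneg_of_nonpos (le_of_lt hgi) (mul_nonpos_of_nonneg_of_nonpos h1 this)
    nlinarith
  have hw0 : w = 0 := by
    have := real_inner_self_nonneg (x := w)
    exact inner_self_eq_zero.mp (le_antisymm hww this)
  have htempty : t = ∅ := by
    by_contra hne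
    have hfw : f w = 0 := by rw [hw0]; exact map_zero f
    rw [hw, map_sum] at hfw
    have hpos' : 0 < ∑ i ∈ t, f (g i • (i:V)) := by
      apply Finset.sum_pos
      · intro i hit
        rw [map_smul, smul_eq_mul]
        exact mul_pos (Finset.mem_filter.mp hit).2 (hpos i i.2)
      · exact Finset.nonempty_of_ne_empty hne
    linarith
  -- now all g ≤ 0 on s, and sum over u of (-g j) f j = 0 forces g = 0
  have hzero : ∀ j ∈ u, -g j * f (j : V) = 0 := by
    have hfw : f w = 0 := by rw [hw0]; exact map_zero f
    rw [hw2, map_sum] at hfw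
    have heach : ∀ j ∈ u, 0 ≤ f ((-g j) • (j:V)) := by
      intro j hju
      rw [map_smul, smul_eq_mul]
      have : ¬ 0 < g j := (Finset.mem_filter.mp hju).2
      exact mul_nonneg (by linarith) (le_of_lt (hpos j j.2))
    intro j hju
    have := (Finset.sum_eq_zero_iff_of_nonneg heach).mp hfw j hju
    rwa [map_smul, smul_eq_mul] at this
  have hiu : i ∈ u := by
    rw [hu, Finset.mem_filter]
    refine ⟨hi, fun hgi => ?_⟩
    have : i ∈ t := Finset.mem_filter.mpr ⟨hi, hgi⟩
    rw [htempty] at this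
    exact absurd this (Finset.notMem_empty i)
  have := hzero i hiu
  have hfi : f (i:V) ≠ 0 := ne_of_gt (hpos i i.2)
  have : -g i = 0 := by
    rcases mul_eq_zero.mp this with h | h
    · exact h
    · exact absurd h hfi
  linarith

def RS.pos (R : Set V) (f : V →ₗ[ℝ] ℝ) : Set V := {r ∈ R | 0 < f r}

def RS.ind (R : Set V) (f : V →ₗ[ℝ] ℝ) : Set V :=
  {r ∈ RS.pos R f | ¬ ∃ a ∈ RS.pos R f, ∃ b ∈ RS.pos R f, r = a + b}

lemma RS.pos_decomp {R : Set V} (hR : IsRootSystemIn R) (f : V →ₗ[ℝ] ℝ) :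
    ∀ r ∈ RS.pos R f, ∃ c : V →₀ ℤ, (c.support : Set V) ⊆ RS.ind R f ∧
      r = c.sum (fun v n => n • v) ∧ ∀ v, 0 ≤ c v := by
  classical
  set T := (hR.1.toFinset).filter (fun s => 0 < f s) with hT
  have hmemT : ∀ {x : V}, x ∈ RS.pos R f → x ∈ T := by
    intro x hx
    rw [hT, Finset.mem_filter, Set.Finite.mem_toFinset]
    exact ⟨hx.1, hx.2⟩
  suffices H : ∀ n : ℕ, ∀ r ∈ RS.pos R f, (T.filter (fun s => f s ≤ f r)).card ≤ n →
      ∃ c : V →₀ ℤ, (c.support : Set V) ⊆ RS.ind R f ∧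
        r = c.sum (fun v n => n • v) ∧ ∀ v, 0 ≤ c v by
    exact fun r hr => H _ r hr le_rfl
  intro n
  induction n with
  | zero =>
    intro r hr hcard
    exfalso
    have : r ∈ T.filter (fun s => f s ≤ f r) :=
      Finset.mem_filter.mpr ⟨hmemT hr, le_rfl⟩
    have := Finset.card_pos.mpr ⟨r, this⟩
    omega
  | succ n ih =>
    intro r hr hcard
    by_cases hind : r ∈ RS.ind R f
    · refine ⟨Finsupp.single r 1, ?_, ?_, ?_⟩
      · intro x hx
        simp only [Finset.coe_subset, Finsupp.support_single_ne_zero r one_ne_zero] at hx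
        simp only [Finset.coe_singleton, Set.mem_singleton_iff] at hx
        rwa [hx]
      · rw [Finsupp.sum_single_index] <;> simp
      · intro v
        rw [Finsupp.single_apply]
        split <;> omega
    · have hdec : ∃ a ∈ RS.pos R f, ∃ b ∈ RS.pos R f, r = a + b := by
        by_contra hcon
        exact hind ⟨hr, hcon⟩
      obtain ⟨a, ha, b, hb, hab⟩ := hdec
      have hfr : f r = f a + f b := by rw [hab, map_add]
      have hlt : ∀ x ∈ RS.pos R f, f x < f r →
          (T.filter (fun s => f s ≤ f x)).card ≤ n := by
        intro x _ hx
        have hss : T.filter (fun s => f s ≤ f x) ⊂ T.filter (fun s => f s ≤ f r) := by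
          have hsub : T.filter (fun s => f s ≤ f x) ⊆ T.filter (fun s => f s ≤ f r) := by
            intro y hy
            rw [Finset.mem_filter] at *
            exact ⟨hy.1, le_trans hy.2 (le_of_lt hx)⟩
          refine (Finset.ssubset_iff_of_subset hsub).mpr
            ⟨r, Finset.mem_filter.mpr ⟨hmemT hr, le_rfl⟩,
              fun h => absurd (Finset.mem_filter.mp h).2 (not_le.mpr hx)⟩
        have := Finset.card_lt_card hss
        omega
      obtain ⟨ca, hca1, hca2, hca3⟩ := ih a ha (hlt a ha (by linarith [hb.2]))
      obtain ⟨cb, hcb1, hcb2, hcb3⟩ := ih b hb (hlt b hb (by linarith [ha.2]))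
      refine ⟨ca + cb, ?_, ?_, ?_⟩
      · intro x hx
        have := Finsupp.support_add (g₁ := ca) (g₂ := cb) hx
        rcases Finset.mem_union.mp this with h | h
        · exact hca1 h
        · exact hcb1 h
      · rw [Finsupp.sum_add_index' (fun v => zero_smul ℤ v) (fun v m n => add_smul m n v)]
        rw [hab, hca2, hcb2]
      · intro v
        simp only [Finsupp.add_apply]
        exact add_nonneg (hca3 v) (hcb3 v)

lemma RS.all_decomp {R : Set V} (hR : IsRootSystemIn R) (f : V →ₗ[ℝ] ℝ)
    (hf : ∀ r ∈ R, f r ≠ 0) :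
    ∀ r ∈ R, ∃ c : V →₀ ℤ, (c.support : Set V) ⊆ RS.ind R f ∧
      r = c.sum (fun v n => n • v) ∧ ((∀ v, 0 ≤ c v) ∨ (∀ v, c v ≤ 0)) := by
  intro r hr
  rcases lt_or_gt_of_ne (hf r hr) with hneg | hpos
  · have hnr : -r ∈ RS.pos R f := ⟨RS.neg_mem hR hr, by rw [map_neg]; linarith⟩
    obtain ⟨c, hc1, hc2, hc3⟩ := RS.pos_decomp hR f (-r) hnr
    refine ⟨-c, ?_, ?_, Or.inr fun v => by simpa using neg_nonpos.mpr (hc3 v)⟩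
    · rwa [Finsupp.support_neg]
    · rw [Finsupp.sum_neg_index (fun v => zero_smul ℤ v)]
      have : (c.sum fun v n => (-n) • v) = - (c.sum fun v n => n • v) := by
        rw [← Finsupp.sum_neg]
        exact Finsupp.sum_congr fun v _ => (neg_smul _ _)
      rw [this, ← hc2, neg_neg]
  · obtain ⟨c, hc1, hc2, hc3⟩ := RS.pos_decomp hR f r ⟨hr, hpos⟩
    exact ⟨c, hc1, hc2, Or.inl hc3⟩

lemma RS.isBaseOf_ind {R : Set V} (hR : IsRootSystem R) (f : V →ₗ[ℝ] ℝ)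
    (hf : ∀ r ∈ R, f r ≠ 0) : IsBaseOf R (RS.ind R f) := by
  obtain ⟨hRin, hspan⟩ := hR
  have hsub : RS.ind R f ⊆ R := fun x hx => hx.1.1
  have hinn : ∀ α ∈ RS.ind R f, ∀ β ∈ RS.ind R f, α ≠ β → ⟪α, β⟫ ≤ 0 := by
    intro α hα β hβ hne
    by_contra hip
    push_neg at hip
    have hsubm : α - β ∈ R := RS.sub_mem_of_inner_pos hRin hα.1.1 hβ.1.1 hne hip
    rcases lt_or_gt_of_ne (hf _ hsubm) with hlt | hgt
    · have hβα : β - α ∈ R := by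
        have := RS.neg_mem hRin hsubm
        rwa [neg_sub] at this
      have hβαpos : β - α ∈ RS.pos R f := ⟨hβα, by rw [map_sub]; rw [map_sub] at hlt; linarith⟩
      exact hβ.2 ⟨β - α, hβαpos, α, hα.1, by abel⟩
    · have hαβpos : α - β ∈ RS.pos R f := ⟨hsubm, hgt⟩
      exact hα.2 ⟨α - β, hαβpos, β, hβ.1, by abel⟩
  have hli : LinearIndependent ℝ ((↑) : RS.ind R f → V) :=
    RS.linearIndependent_of_pos_of_inner_nonpos f (fun v hv => hv.1.2) hinn
  have hdecomp := RS.all_decomp hRin f hf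
  refine ⟨hsub, hli, ?_, hdecomp⟩
  apply le_antisymm (Submodule.span_mono hsub)
  rw [Submodule.span_le]
  intro r hr
  obtain ⟨c, hc1, hc2, _⟩ := hdecomp r hr
  rw [hc2]
  apply Submodule.sum_mem
  intro v hv
  exact zsmul_mem (Submodule.subset_span (hc1 hv)) _

lemma RS.exists_annihilating_functional (S : Set V) (hS : S.Finite) (V' : Submodule ℝ V)
    (h : ∀ r ∈ S, r ∉ V') :
    ∃ φ : V →ₗ[ℝ] ℝ, (∀ x ∈ V', φ x = 0) ∧ ∀ r ∈ S, φ r ≠ 0 := by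
  classical
  set W := V'ᗮ with hW
  -- for each r ∈ S, the functional on W given by inner with r has proper kernel
  have hker : ∀ r ∈ S, LinearMap.ker ((innerSL ℝ r).toLinearMap.comp W.subtype) ≠ ⊤ := by
    intro r hr hcontra
    set p : V := r - (V'.orthogonalProjectionOnto r : V) with hp
    have hpW : p ∈ W := Submodule.sub_starProjection_mem_orthogonal (K := V') r
    have hpr : ⟪r, p⟫ = ⟪p, p⟫ := by
      have : r = (V'.orthogonalProjectionOnto r : V) + p := by rw [hp]; abel
      rw [this, inner_add_left]
      have h0 : ⟪(V'.orthogonalProjectionOnto r : V), p⟫ = 0 := by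
        have h3 : ∀ u ∈ V', ⟪u, p⟫ = 0 := (Submodule.mem_orthogonal V' p).mp hpW
        rw [real_inner_comm]
        exact real_inner_comm p _ ▸ h3 _ (V'.orthogonalProjectionOnto r).2
      rw [h0, zero_add]
    have hp0 : p ≠ 0 := by
      intro hp0
      apply h r hr
      have : r = (V'.orthogonalProjectionOnto r : V) := by
        rw [hp, sub_eq_zero] at hp0; exact hp0
      rw [this]; exact (V'.orthogonalProjectionOnto r).2
    have : (⟨p, hpW⟩ : W) ∈ LinearMap.ker ((innerSL ℝ r).toLinearMap.comp W.subtype) := by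
      rw [hcontra]; trivial
    rw [LinearMap.mem_ker] at this
    simp only [LinearMap.comp_apply, Submodule.subtype_apply,
      ContinuousLinearMap.coe_coe, innerSL_apply_apply] at this
    rw [hpr] at this
    exact hp0 (inner_self_eq_zero.mp this)
  -- avoid the finite union of proper kernels
  set ks : Finset (Subspace ℝ W) :=
    hS.toFinset.image (fun r => LinearMap.ker ((innerSL ℝ r).toLinearMap.comp W.subtype))
    with hks
  have htop : ⊤ ∉ ks := by
    rw [hks]
    simp only [Finset.mem_image, Set.Finite.mem_toFinset]
    rintro ⟨r, hr, hrk⟩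
    exact hker r hr hrk
  have hne := Subspace.biUnion_ne_univ_of_top_notMem htop
  have : ∃ w : W, ∀ p ∈ ks, w ∉ p := by
    by_contra hcon
    push_neg at hcon
    apply hne
    ext w
    simp only [Set.mem_iUnion, Set.mem_univ, iff_true]
    obtain ⟨p, hp1, hp2⟩ := hcon w
    exact ⟨p, hp1, hp2⟩
  obtain ⟨w, hw⟩ := this
  refine ⟨(innerSL ℝ (w : V)).toLinearMap, ?_, ?_⟩
  · intro x hx
    simp only [ContinuousLinearMap.coe_coe, innerSL_apply_apply]
    have h2 : ∀ u ∈ V', ⟪u, (w:V)⟫ = 0 := (Submodule.mem_orthogonal V' (w:V)).mp w.2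
    rw [real_inner_comm]
    exact h2 x hx
  · intro r hr
    have := hw _ (Finset.mem_image_of_mem _ (hS.mem_toFinset.mpr hr))
    rw [LinearMap.mem_ker] at this
    simp only [LinearMap.comp_apply, Submodule.subtype_apply,
      ContinuousLinearMap.coe_coe, innerSL_apply_apply] at this ⊢
    rw [real_inner_comm]
    exact this

lemma RS.exists_one_functional (C : Set V) (hC : LinearIndependent ℝ ((↑) : C → V)) :
    ∃ g : V →ₗ[ℝ] ℝ, ∀ v ∈ C, g v = 1 := by
  classical
  let b := Module.Basis.extend hC
  refine ⟨b.constr (M' := ℝ) ℝ (fun i => if (i : V) ∈ C then 1 else 0), ?_⟩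
  intro v hv
  have hvb : v ∈ LinearIndepOn.extend (K := ℝ) (v := id) hC (Set.subset_univ C) := Module.Basis.subset_extend hC hv
  have hb : v = b ⟨v, hvb⟩ := (Module.Basis.extend_apply_self hC ⟨v, hvb⟩).symm
  rw [hb, Module.Basis.constr_basis]
  simp [hv]

/-- A base of `R' = R ∩ V'` extends to a base of `R`. -/
theorem base_of_inter_extends (R : Set V) (hR : IsRootSystem R)
    (V' : Submodule ℝ V) (C : Set V)
    (hC : IsBaseOf (R ∩ (V' : Set V)) C) :
    ∃ B : Set V, IsBaseOf R B ∧ C ⊆ B := by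
  classical
  obtain ⟨hCsub, hCli, hCspan, hCrep⟩ := hC
  by_cases hRV : R ⊆ (V' : Set V)
  · have hinter : R ∩ (V' : Set V) = R := Set.inter_eq_self_of_subset_left hRV
    rw [hinter] at hCsub hCspan hCrep
    exact ⟨C, ⟨hCsub, hCli, hCspan, hCrep⟩, subset_rfl⟩
  obtain ⟨g, hg⟩ := RS.exists_one_functional C hCli
  have hRfin := hR.1.1
  have h0R : (0 : V) ∉ R := hR.1.2.1
  -- key estimate: g of any root in V' has absolute value ≥ 1
  have hg1 : ∀ r ∈ R ∩ (V' : Set V), 1 ≤ g r ∨ g r ≤ -1 := by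
    intro r hr
    obtain ⟨c, hc1, hc2, hc3⟩ := hCrep r hr
    have hc0 : c ≠ 0 := by
      intro h
      rw [h] at hc2
      simp [Finsupp.sum] at hc2
      exact h0R (hc2 ▸ hr.1)
    have hgr : g r = ((∑ v ∈ c.support, c v : ℤ) : ℝ) := by
      rw [hc2, Finsupp.sum, map_sum]
      push_cast
      apply Finset.sum_congr rfl
      intro v hv
      rw [map_zsmul, zsmul_eq_mul, hg v (hc1 hv), mul_one]
    obtain ⟨v₀, hv₀⟩ := Finsupp.support_nonempty_iff.mpr hc0
    rcases hc3 with hpos | hneg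
    · left
      rw [hgr]
      have h1 : (1 : ℤ) ≤ ∑ v ∈ c.support, c v := by
        have hv₀ne : c v₀ ≠ 0 := Finsupp.mem_support_iff.mp hv₀
        have hp := hpos v₀
        calc (1:ℤ) ≤ c v₀ := by omega
          _ ≤ _ := Finset.single_le_sum (fun i _ => hpos i) hv₀
      exact_mod_cast h1
    · right
      rw [hgr]
      have h1 : (∑ v ∈ c.support, c v) ≤ -1 := by
        have hv₀ne : c v₀ ≠ 0 := Finsupp.mem_support_iff.mp hv₀
        have h2 : c v₀ ≤ -1 := by have := hneg v₀; omega
        have h3 : -c v₀ ≤ ∑ v ∈ c.support, -c v :=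
          Finset.single_le_sum (fun i _ => neg_nonneg.mpr (hneg i)) hv₀
        rw [Finset.sum_neg_distrib] at h3
        have hn := hneg v₀
        omega
      exact_mod_cast h1
  have hSne : ∃ r ∈ R, r ∉ (V' : Set V) := by
    by_contra h; push_neg at h; exact hRV h
  obtain ⟨r₀, hr₀R, hr₀V⟩ := hSne
  have hSfin : (R \ (V' : Set V)).Finite := hRfin.subset Set.diff_subset
  obtain ⟨φ, hφ0, hφne⟩ := RS.exists_annihilating_functional (R \ (V' : Set V)) hSfin V'
    (fun r hr => hr.2)
  set Rfin := hRfin.toFinset with hRfinDef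
  have hRne : Rfin.Nonempty := ⟨r₀, hRfin.mem_toFinset.mpr hr₀R⟩
  set M : ℝ := max ((Rfin.image (fun r => |g r|)).max' (hRne.image _)) 1 with hM
  have hM1 : 1 ≤ M := le_max_right _ _
  have hMb : ∀ r ∈ R, |g r| ≤ M := by
    intro r hr
    refine le_trans ?_ (le_max_left _ _)
    exact Finset.le_max' _ _
      (Finset.mem_image_of_mem (fun r => |g r|) (hRfin.mem_toFinset.mpr hr))
  set Sfin := hSfin.toFinset with hSfinDef
  have hSne' : (Sfin.image (fun r => |φ r|)).Nonempty :=
    ⟨|φ r₀|, Finset.mem_image_of_mem _ (hSfin.mem_toFinset.mpr ⟨hr₀R, hr₀V⟩)⟩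
  set δ : ℝ := (Sfin.image (fun r => |φ r|)).min' hSne' with hδ
  have hδb : ∀ r ∈ R, r ∉ (V' : Set V) → δ ≤ |φ r| := by
    intro r hr hrV
    exact Finset.min'_le _ _
      (Finset.mem_image_of_mem (fun r => |φ r|) (hSfin.mem_toFinset.mpr ⟨hr, hrV⟩))
  have hδpos : 0 < δ := by
    obtain ⟨x, hx, hxe⟩ := Finset.mem_image.mp (Finset.min'_mem _ hSne')
    rw [hδ, ← hxe]
    exact abs_pos.mpr (hφne x (hSfin.mem_toFinset.mp hx))
  set N : ℝ := (2*M + 1)/δ with hN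
  have hNδ : N * δ = 2*M + 1 := div_mul_cancel₀ _ (ne_of_gt hδpos)
  have hNpos : 0 < N := div_pos (by linarith) hδpos
  set f : V →ₗ[ℝ] ℝ := N • φ + g with hf
  have hfapp : ∀ x : V, f x = N * φ x + g x := by
    intro x
    rw [hf]
    simp
  have hfV' : ∀ x ∈ (V' : Set V), f x = g x := by
    intro x hx
    rw [hfapp, hφ0 x hx, mul_zero, zero_add]
  have hbig : ∀ r ∈ R, r ∉ (V' : Set V) → M + 1 ≤ |f r| := by
    intro r hr hrV
    have h1 : 2*M + 1 ≤ |N * φ r| := by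
      rw [abs_mul, abs_of_pos hNpos]
      calc 2*M+1 = N * δ := hNδ.symm
        _ ≤ N * |φ r| := mul_le_mul_of_nonneg_left (hδb r hr hrV) (le_of_lt hNpos)
    have h2 : |g r| ≤ M := hMb r hr
    have h3 : f r = N * φ r + g r := hfapp r
    have h4 : |N * φ r| ≤ |N * φ r + g r| + |g r| := by
      have h5 := abs_add_le (N * φ r + g r) (-(g r))
      simpa using h5
    rw [← h3] at h4
    linarith
  have hfne : ∀ r ∈ R, f r ≠ 0 := by
    intro r hr
    by_cases hrV : r ∈ (V' : Set V)
    · rw [hfV' r hrV]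
      rcases hg1 r ⟨hr, hrV⟩ with h | h <;> intro h0 <;> rw [h0] at h <;> linarith
    · intro h0
      have := hbig r hr hrV
      rw [h0, abs_zero] at this
      linarith
  refine ⟨RS.ind R f, RS.isBaseOf_ind hR f hfne, ?_⟩
  intro v hv
  have hvRV : v ∈ R ∩ (V' : Set V) := hCsub hv
  have hfv : f v = 1 := by rw [hfV' v hvRV.2]; exact hg v hv
  refine ⟨⟨hvRV.1, by rw [hfv]; norm_num⟩, ?_⟩
  rintro ⟨a, ha, b, hb, hab⟩
  have hfa : 0 < f a := ha.2
  have hfb : 0 < f b := hb.2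
  have hsum : f a + f b = 1 := by rw [← hfv, hab, map_add]
  have hfa1 : f a < 1 := by linarith
  have haV : a ∈ (V' : Set V) := by
    by_contra haV
    have := hbig a ha.1 haV
    rw [abs_of_pos hfa] at this
    linarith
  rcases hg1 a ⟨ha.1, haV⟩ with h | h <;> rw [← hfV' a haV] at h <;> linarith
end

section
/- In the root system B_n (n ≥ 4) realized as {±e_i ± e_j : i < j} ∪ {±e_i} in ℝⁿ, the set C = {e_3 − e_2, e_2 − e_1, e_1 + e_2} (a π-system of type A_3, with (r_1 + 2r_2 + r_3)/2 = e_3 being a root) cannot be extended to a base of B_n. -/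
open scoped RealInnerProductSpace

variable {V : Type*} [NormedAddCommGroup V] [InnerProductSpace ℝ V] [FiniteDimensional ℝ V]

/-- The standard basis vector `e_i` of `ℝⁿ`. -/
noncomputable def ee (n : ℕ) (i : Fin n) : EuclideanSpace ℝ (Fin n) :=
  EuclideanSpace.single i (1 : ℝ)

/-- The root system `B_n = {±e_i ± e_j : i ≠ j} ∪ {±e_i}`. -/
noncomputable def BnRoots (n : ℕ) : Set (EuclideanSpace ℝ (Fin n)) :=
  {v | (∃ i j : Fin n, i ≠ j ∧ ∃ s t : ℝ, (s = 1 ∨ s = -1) ∧ (t = 1 ∨ t = -1) ∧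
      v = s • ee n i + t • ee n j) ∨ (∃ i : Fin n, v = ee n i ∨ v = -ee n i)}

/-- The root system `C_n = {±e_i ± e_j : i ≠ j} ∪ {±2e_i}`. -/
noncomputable def CnRoots (n : ℕ) : Set (EuclideanSpace ℝ (Fin n)) :=
  {v | (∃ i j : Fin n, i ≠ j ∧ ∃ s t : ℝ, (s = 1 ∨ s = -1) ∧ (t = 1 ∨ t = -1) ∧
      v = s • ee n i + t • ee n j) ∨
    (∃ i : Fin n, v = (2 : ℝ) • ee n i ∨ v = -((2 : ℝ) • ee n i))}

/-- The root system `D_n = {±e_i ± e_j : i ≠ j}`. -/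
noncomputable def DnRoots (n : ℕ) : Set (EuclideanSpace ℝ (Fin n)) :=
  {v | ∃ i j : Fin n, i ≠ j ∧ ∃ s t : ℝ, (s = 1 ∨ s = -1) ∧ (t = 1 ∨ t = -1) ∧
      v = s • ee n i + t • ee n j}

/-- In `B_n` (`n ≥ 4`), the `A_3` π-system
`C = {e_3 − e_2, e_2 − e_1, e_1 + e_2}` cannot be extended to a base of `B_n`. -/
theorem a3_in_bn_not_extendable (n : ℕ) (hn : 4 ≤ n)
    (C : Set (EuclideanSpace ℝ (Fin n)))
    (hC : C = {ee n ⟨2, by omega⟩ - ee n ⟨1, by omega⟩,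
               ee n ⟨1, by omega⟩ - ee n ⟨0, by omega⟩,
               ee n ⟨0, by omega⟩ + ee n ⟨1, by omega⟩}) :
    ¬ ∃ B : Set (EuclideanSpace ℝ (Fin n)), IsBaseOf (BnRoots n) B ∧ C ⊆ B := by
  rintro ⟨B, ⟨hBR, hBli, hspan, hint⟩, hCB⟩
  have h0 : (0 : ℕ) < n := by omega
  have h1 : (1 : ℕ) < n := by omega
  have h2 : (2 : ℕ) < n := by omega
  set i0 : Fin n := ⟨0, h0⟩ with hi0
  set i1 : Fin n := ⟨1, h1⟩ with hi1
  set i2 : Fin n := ⟨2, h2⟩ with hi2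
  set r1 : EuclideanSpace ℝ (Fin n) := ee n i2 - ee n i1 with hr1
  set r2 : EuclideanSpace ℝ (Fin n) := ee n i1 - ee n i0 with hr2
  set r3 : EuclideanSpace ℝ (Fin n) := ee n i0 + ee n i1 with hr3
  have hr1B : r1 ∈ B := hCB (by rw [hC]; left; rfl)
  have hr2B : r2 ∈ B := hCB (by rw [hC]; right; left; rfl)
  have hr3B : r3 ∈ B := hCB (by rw [hC]; right; right; rfl)
  -- distinctness via coordinate 0
  have heval : ∀ (v w : EuclideanSpace ℝ (Fin n)), v = w → v i0 = w i0 := by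
    intro v w h; rw [h]
  have hne01 : i2 ≠ i0 := by simp [hi0, hi2, Fin.ext_iff]
  have hne11 : i1 ≠ i0 := by simp [hi0, hi1, Fin.ext_iff]
  have hne01' : i0 ≠ i2 := Ne.symm hne01
  have hne11' : i0 ≠ i1 := Ne.symm hne11
  have hval1 : r1 i0 = 0 := by
    simp [hr1, ee, EuclideanSpace.single_apply, hne01, hne11, hne01', hne11']
  have hval2 : r2 i0 = -1 := by
    simp [hr2, ee, EuclideanSpace.single_apply, hne11, hne11']
  have hval3 : r3 i0 = 1 := by
    simp [hr3, ee, EuclideanSpace.single_apply, hne11, hne11']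
  have h12 : r1 ≠ r2 := fun h => by have := heval _ _ h; rw [hval1, hval2] at this; norm_num at this
  have h32 : r3 ≠ r2 := fun h => by have := heval _ _ h; rw [hval3, hval2] at this; norm_num at this
  -- e2 is a root
  have he2R : ee n i2 ∈ BnRoots n := Or.inr ⟨i2, Or.inl rfl⟩
  obtain ⟨c, hcsupp, hcsum, -⟩ := hint _ he2R
  -- the key identity
  have hkey : ee n i2 = r1 + (1/2 : ℝ) • r2 + (1/2 : ℝ) • r3 := by
    rw [hr1, hr2, hr3]; module
  -- build the real finsupp
  set l : EuclideanSpace ℝ (Fin n) →₀ ℝ :=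
    c.mapRange (Int.cast) Int.cast_zero -
      (Finsupp.single r1 1 + Finsupp.single r2 (1/2) + Finsupp.single r3 (1/2)) with hl
  have hcomb : Finsupp.linearCombination ℝ id l = 0 := by
    rw [hl, map_sub, map_add, map_add]
    rw [Finsupp.linearCombination_single, Finsupp.linearCombination_single,
      Finsupp.linearCombination_single]
    have : Finsupp.linearCombination ℝ id (c.mapRange (Int.cast) Int.cast_zero) = ee n i2 := by
      rw [Finsupp.linearCombination_apply, Finsupp.sum_mapRange_index (by simp)]
      rw [hcsum]
      exact Finsupp.sum_congr fun v _ => by simp [Int.cast_smul_eq_zsmul]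
    rw [this]
    simp only [id]
    rw [hkey]; module
  have hlsupp : l ∈ Finsupp.supported ℝ ℝ B := by
    rw [Finsupp.mem_supported']
    intro x hx
    have hc0 : c x = 0 := by
      by_contra h
      exact hx (hcsupp (Finsupp.mem_support_iff.2 h))
    have hx1 : r1 ≠ x := fun h => hx (h ▸ hr1B)
    have hx2 : r2 ≠ x := fun h => hx (h ▸ hr2B)
    have hx3 : r3 ≠ x := fun h => hx (h ▸ hr3B)
    simp [hl, Finsupp.mapRange_apply, hc0, Finsupp.single_eq_of_ne' hx1,
      Finsupp.single_eq_of_ne' hx2, Finsupp.single_eq_of_ne' hx3]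
  have hl0 : l = 0 := linearIndepOn_iff.1 (linearIndependent_subtype_iff.1 hBli) l hlsupp hcomb
  have := congrArg (fun f : EuclideanSpace ℝ (Fin n) →₀ ℝ => f r2) hl0
  simp only [hl, Finsupp.sub_apply, Finsupp.add_apply, Finsupp.single_eq_of_ne' h12,
    Finsupp.single_eq_same, Finsupp.single_eq_of_ne' h32, Finsupp.mapRange_apply,
    Finsupp.coe_zero, Pi.zero_apply] at this
  have h2c : (2 : ℤ) * c r2 = 1 := by
    have : (c r2 : ℝ) = 1/2 := by linarith
    have h2 : ((2 : ℤ) * c r2 : ℝ) = 1 := by push_cast; linarith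
    exact_mod_cast h2
  omega
end

section
/- Let C = {r_1, r_2, r_3} be a π-system of type A_3 in B_n (so ⟨r_1,r_2⟩ < 0, ⟨r_2,r_3⟩ < 0, ⟨r_1,r_3⟩ = 0, all r_i long roots). If (r_1 + 2r_2 + r_3)/2 is not a root of B_n, then every root of B_n lying in the span of C is a ℤ-linear combination of r_1, r_2, r_3. -/
open scoped RealInnerProductSpace

variable {V : Type*} [NormedAddCommGroup V] [InnerProductSpace ℝ V] [FiniteDimensional ℝ V]

lemma ee_apply (n : ℕ) (i j : Fin n) : ee n i j = if j = i then 1 else 0 := by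
  simp [ee, EuclideanSpace.single_apply]

lemma inner_ee (n : ℕ) (i j : Fin n) : ⟪ee n i, ee n j⟫ = if i = j then 1 else 0 := by
  simp [ee, EuclideanSpace.inner_single_left, EuclideanSpace.single_apply, eq_comm]

lemma bn_intCoord {n : ℕ} {v : EuclideanSpace ℝ (Fin n)} (hv : v ∈ BnRoots n) :
    ∀ i, ∃ k : ℤ, v i = k := by
  intro i
  rcases hv with ⟨p, q, hpq, s, t, hs, ht, rfl⟩ | ⟨p, hp | hp⟩
  · obtain ⟨ks, hks⟩ : ∃ a : ℤ, s = a := by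
      rcases hs with rfl | rfl
      exacts [⟨1, by norm_num⟩, ⟨-1, by norm_num⟩]
    obtain ⟨kt, hkt⟩ : ∃ a : ℤ, t = a := by
      rcases ht with rfl | rfl
      exacts [⟨1, by norm_num⟩, ⟨-1, by norm_num⟩]
    refine ⟨ks * (if i = p then 1 else 0) + kt * (if i = q then 1 else 0), ?_⟩
    have hev : (s • ee n p + t • ee n q) i = s * ee n p i + t * ee n q i := rfl
    rw [hev, ee_apply, ee_apply, hks, hkt]
    split_ifs <;> push_cast <;> ring
  · subst hp
    rw [ee_apply]
    refine ⟨if i = p then 1 else 0, ?_⟩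
    split_ifs <;> norm_num
  · subst hp
    have hni : (-ee n p) i = -(ee n p i) := rfl
    rw [hni, ee_apply]
    refine ⟨if i = p then -1 else 0, ?_⟩
    split_ifs <;> norm_num

lemma inner_int {n : ℕ} {u v : EuclideanSpace ℝ (Fin n)}
    (hu : ∀ i, ∃ k : ℤ, u i = k) (hv : ∀ i, ∃ k : ℤ, v i = k) : ∃ k : ℤ, ⟪u,v⟫ = k := by
  choose ku hku using hu
  choose kv hkv using hv
  refine ⟨∑ i, ku i * kv i, ?_⟩
  have h : ⟪u,v⟫ = ∑ i, u i * v i := by simp [PiLp.inner_apply, mul_comm]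
  rw [h]; push_cast
  exact Finset.sum_congr rfl fun i _ => by rw [hku, hkv]

lemma bn_norm {n : ℕ} {v : EuclideanSpace ℝ (Fin n)} (hv : v ∈ BnRoots n) :
    ⟪v,v⟫ = 2 ∨ ⟪v,v⟫ = 1 := by
  rcases hv with ⟨p, q, hpq, s, t, hs, ht, rfl⟩ | ⟨p, hp | hp⟩
  · left
    simp only [inner_add_left, inner_add_right, real_inner_smul_left, real_inner_smul_right,
      inner_ee]
    rcases hs with rfl | rfl <;> rcases ht with rfl | rfl <;> simp [hpq, hpq.symm] <;> norm_num
  · subst hp; right; rw [inner_ee]; simp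
  · subst hp; right; rw [inner_neg_neg, inner_ee]; simp

lemma int_unit {n : ℕ} {v : EuclideanSpace ℝ (Fin n)}
    (hv : ∀ i, ∃ k : ℤ, v i = k) (h1 : ⟪v,v⟫ = 1) :
    ∃ m, v = ee n m ∨ v = -ee n m := by
  choose k hk using hv
  have hsum : ∑ i, (k i)^2 = 1 := by
    have h2 : ⟪v,v⟫ = ∑ i, v i * v i := rfl
    have h3 : ((∑ i, (k i)^2 : ℤ) : ℝ) = 1 := by
      push_cast
      rw [← h1, h2]
      exact Finset.sum_congr rfl fun i _ => by rw [hk]; ring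
    exact_mod_cast h3
  obtain ⟨m, hm⟩ : ∃ m, k m ≠ 0 := by
    by_contra h; push_neg at h
    have h0 : ∑ i, (k i)^2 = 0 := Finset.sum_eq_zero fun i _ => by rw [h i]; ring
    omega
  have hle : (k m)^2 ≤ 1 := hsum ▸ Finset.single_le_sum (fun i _ => sq_nonneg (k i)) (Finset.mem_univ m)
  have habs : 1 ≤ |k m| := Int.one_le_abs hm
  have hge : 1 ≤ (k m)^2 := by nlinarith [sq_abs (k m)]
  have hm1 : (k m)^2 = 1 := le_antisymm hle hge
  have hrest : ∀ j, j ≠ m → k j = 0 := by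
    intro j hj
    have hz : ∑ i ∈ Finset.univ.erase m, (k i)^2 = 0 := by
      rw [Finset.sum_erase_eq_sub (Finset.mem_univ m), hsum]
      omega
    have := (Finset.sum_eq_zero_iff_of_nonneg (fun i _ => sq_nonneg (k i))).mp hz j
      (Finset.mem_erase.mpr ⟨hj, Finset.mem_univ j⟩)
    exact pow_eq_zero_iff (n := 2) (by norm_num) |>.mp this
  have hcase : k m = 1 ∨ k m = -1 := by
    have hub : k m ≤ 1 := by nlinarith [sq_nonneg (k m - 1)]
    have hlb : -1 ≤ k m := by nlinarith [sq_nonneg (k m + 1)]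
    omega
  refine ⟨m, ?_⟩
  rcases hcase with hc | hc
  · left; ext i
    rw [hk i, ee_apply]
    by_cases h2 : i = m
    · subst h2; rw [hc]; simp
    · rw [hrest i h2]; simp [h2]
  · right; ext i
    have hni : (-ee n m) i = -(ee n m i) := rfl
    rw [hk i, hni, ee_apply]
    by_cases h2 : i = m
    · subst h2; rw [hc]; simp
    · rw [hrest i h2]; simp [h2]

lemma odd_sq (m : ℤ) (h : m % 2 = 1) : ∃ j, m^2 = 8*j+1 := by
  obtain ⟨q, rfl⟩ : ∃ q, m = 2*q+1 := ⟨m/2, by omega⟩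
  obtain ⟨j, hj⟩ := Int.even_mul_succ_self q
  exact ⟨j, by rw [show (2*q+1)^2 = 4*(q*(q+1))+1 from by ring, hj]; ring⟩

/-- If `{r₁, r₂, r₃}` is an `A_3` π-system of long roots in `B_n` and
`(r₁ + 2r₂ + r₃)/2` is not a root, then every root in the span of the `rᵢ` is a
`ℤ`-linear combination of them. -/
theorem a3_piSystem_in_bn_spans (n : ℕ) (r₁ r₂ r₃ : EuclideanSpace ℝ (Fin n))
    (h₁ : r₁ ∈ BnRoots n) (h₂ : r₂ ∈ BnRoots n) (h₃ : r₃ ∈ BnRoots n)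
    (hl₁ : ⟪r₁, r₁⟫ = 2) (hl₂ : ⟪r₂, r₂⟫ = 2) (hl₃ : ⟪r₃, r₃⟫ = 2)
    (h₁₂ : ⟪r₁, r₂⟫ < 0) (h₂₃ : ⟪r₂, r₃⟫ < 0) (h₁₃ : ⟪r₁, r₃⟫ = 0)
    (hpi : IsPiSystemIn (BnRoots n) {r₁, r₂, r₃})
    (hnot : (1/2 : ℝ) • (r₁ + (2 : ℝ) • r₂ + r₃) ∉ BnRoots n) :
    ∀ r ∈ BnRoots n,
      r ∈ Submodule.span ℝ ({r₁, r₂, r₃} : Set (EuclideanSpace ℝ (Fin n))) →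
      r ∈ (Submodule.span ℤ ({r₁, r₂, r₃} : Set (EuclideanSpace ℝ (Fin n))) :
            Set (EuclideanSpace ℝ (Fin n))) := by
  -- Gram matrix entries
  have hg12 : ⟪r₁, r₂⟫ = -1 := by
    obtain ⟨g, hg⟩ := inner_int (bn_intCoord h₁) (bn_intCoord h₂)
    have hge : (0:ℝ) ≤ ⟪r₁ + r₂, r₁ + r₂⟫ := real_inner_self_nonneg
    rw [real_inner_add_add_self, hl₁, hl₂] at hge
    have hgneg : (g:ℝ) < 0 := by rw [← hg]; exact h₁₂
    have hglb : (-2:ℝ) ≤ (g:ℝ) := by rw [← hg]; linarith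
    have h1 : g < 0 := by exact_mod_cast hgneg
    have h2 : (-2:ℤ) ≤ g := by exact_mod_cast hglb
    have : g = -1 ∨ g = -2 := by omega
    rcases this with h | h
    · rw [hg, h]; norm_num
    · exfalso
      have hz : ⟪r₁ + r₂, r₁ + r₂⟫ = 0 := by
        rw [real_inner_add_add_self, hl₁, hl₂, hg, h]; norm_num
      have : r₁ + r₂ = 0 := inner_self_eq_zero.mp hz
      have hr2 : r₂ = -r₁ := eq_neg_of_add_eq_zero_right this
      rw [hr2, inner_neg_left, h₁₃] at h₂₃
      norm_num at h₂₃
  have hg23 : ⟪r₂, r₃⟫ = -1 := by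
    obtain ⟨g, hg⟩ := inner_int (bn_intCoord h₂) (bn_intCoord h₃)
    have hge : (0:ℝ) ≤ ⟪r₂ + r₃, r₂ + r₃⟫ := real_inner_self_nonneg
    rw [real_inner_add_add_self, hl₂, hl₃] at hge
    have hgneg : (g:ℝ) < 0 := by rw [← hg]; exact h₂₃
    have hglb : (-2:ℝ) ≤ (g:ℝ) := by rw [← hg]; linarith
    have h1 : g < 0 := by exact_mod_cast hgneg
    have h2 : (-2:ℤ) ≤ g := by exact_mod_cast hglb
    have : g = -1 ∨ g = -2 := by omega
    rcases this with h | h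
    · rw [hg, h]; norm_num
    · exfalso
      have hz : ⟪r₂ + r₃, r₂ + r₃⟫ = 0 := by
        rw [real_inner_add_add_self, hl₂, hl₃, hg, h]; norm_num
      have : r₂ + r₃ = 0 := inner_self_eq_zero.mp hz
      have hr3 : r₃ = -r₂ := eq_neg_of_add_eq_zero_right this
      rw [hr3, inner_neg_right] at h₁₃
      have : ⟪r₁, r₂⟫ = 0 := by linarith
      rw [this] at h₁₂
      norm_num at h₁₂
  have c21 : ⟪r₂, r₁⟫ = -1 := by rw [real_inner_comm]; exact hg12
  have c32 : ⟪r₃, r₂⟫ = -1 := by rw [real_inner_comm]; exact hg23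
  have c31 : ⟪r₃, r₁⟫ = 0 := by rw [real_inner_comm]; exact h₁₃
  intro r hrB hsp
  -- coefficients
  rw [Submodule.mem_span_insert] at hsp
  obtain ⟨x, w1, hw1, hr⟩ := hsp
  rw [Submodule.mem_span_insert] at hw1
  obtain ⟨y, w2, hw2, rfl⟩ := hw1
  rw [Submodule.mem_span_singleton] at hw2
  obtain ⟨z, rfl⟩ := hw2
  rw [← add_assoc] at hr
  -- hr : r = x • r₁ + y • r₂ + z • r₃
  obtain ⟨ka, hka⟩ := inner_int (bn_intCoord hrB) (bn_intCoord h₁)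
  obtain ⟨kb, hkb⟩ := inner_int (bn_intCoord hrB) (bn_intCoord h₂)
  obtain ⟨kc, hkc⟩ := inner_int (bn_intCoord hrB) (bn_intCoord h₃)
  have ha : (ka:ℝ) = 2*x - y := by
    have he : ⟪x • r₁ + y • r₂ + z • r₃, r₁⟫ = x*⟪r₁,r₁⟫ + y*⟪r₂,r₁⟫ + z*⟪r₃,r₁⟫ := by
      simp only [inner_add_left, real_inner_smul_left]
    rw [← hr, hka, hl₁, c21, c31] at he
    linarith
  have hb : (kb:ℝ) = -x + 2*y - z := by
    have he : ⟪x • r₁ + y • r₂ + z • r₃, r₂⟫ = x*⟪r₁,r₂⟫ + y*⟪r₂,r₂⟫ + z*⟪r₃,r₂⟫ := by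
      simp only [inner_add_left, real_inner_smul_left]
    rw [← hr, hkb, hg12, hl₂, c32] at he
    linarith
  have hc : (kc:ℝ) = -y + 2*z := by
    have he : ⟪x • r₁ + y • r₂ + z • r₃, r₃⟫ = x*⟪r₁,r₃⟫ + y*⟪r₂,r₃⟫ + z*⟪r₃,r₃⟫ := by
      simp only [inner_add_left, real_inner_smul_left]
    rw [← hr, hkc, h₁₃, hg23, hl₃] at he
    linarith
  have hN : ⟪r,r⟫ = x*(ka:ℝ) + y*(kb:ℝ) + z*(kc:ℝ) := by
    have he : ⟪r, x • r₁ + y • r₂ + z • r₃⟫ = x*⟪r,r₁⟫ + y*⟪r,r₂⟫ + z*⟪r,r₃⟫ := by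
      simp only [inner_add_right, real_inner_smul_right]
    rw [← hr, hka, hkb, hkc] at he
    exact he
  set A : ℤ := 3*ka + 2*kb + kc with hAdef
  have hA4 : (A:ℝ) = 4*x := by rw [hAdef]; push_cast; rw [ha, hb, hc]; ring
  have hSreal : (A:ℝ)^2 + ((A:ℝ)-4*ka)^2 + ((A:ℝ)-2*ka-2*kc)^2 + ((A:ℝ)-2*ka+2*kc)^2
      = 16*⟪r,r⟫ := by
    rw [hN, hA4, ha, hc]
    rw [hb]
    ring
  have hS16 : A^2 + (A-4*ka)^2 + (A-2*ka-2*kc)^2 + (A-2*ka+2*kc)^2 = 32 ∨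
      A^2 + (A-4*ka)^2 + (A-2*ka-2*kc)^2 + (A-2*ka+2*kc)^2 = 16 := by
    rcases bn_norm hrB with h | h
    · left
      have : ((A^2 + (A-4*ka)^2 + (A-2*ka-2*kc)^2 + (A-2*ka+2*kc)^2 : ℤ):ℝ) = 32 := by
        push_cast
        rw [hSreal, h]; norm_num
      exact_mod_cast this
    · right
      have : ((A^2 + (A-4*ka)^2 + (A-2*ka-2*kc)^2 + (A-2*ka+2*kc)^2 : ℤ):ℝ) = 16 := by
        push_cast
        rw [hSreal, h]; norm_num
      exact_mod_cast this
  by_cases hpar : A % 2 = 1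
  · exfalso
    obtain ⟨j1, e1⟩ := odd_sq A hpar
    obtain ⟨j2, e2⟩ := odd_sq (A - 4*ka) (by omega)
    obtain ⟨j3, e3⟩ := odd_sq (A - 2*ka - 2*kc) (by omega)
    obtain ⟨j4, e4⟩ := odd_sq (A - 2*ka + 2*kc) (by omega)
    rcases hS16 with h | h <;> rw [e1, e2, e3, e4] at h <;> omega
  · have hparity : ka % 2 = kc % 2 := by omega
    by_cases h4 : A % 4 = 0
    · -- integral case
      obtain ⟨X, hX⟩ : ∃ X, A = 4*X := ⟨A/4, by omega⟩
      obtain ⟨Y, hY⟩ : ∃ Y, A - 2*ka = 2*Y := ⟨(A - 2*ka)/2, by omega⟩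
      obtain ⟨Z, hZ⟩ : ∃ Z, A - 2*ka + 2*kc = 4*Z := ⟨(A - 2*ka + 2*kc)/4, by omega⟩
      have hxX : x = (X:ℝ) := by
        have : (A:ℝ) = 4*(X:ℝ) := by exact_mod_cast congrArg (Int.cast : ℤ → ℝ) hX
        rw [hA4] at this; linarith
      have hyY : y = (Y:ℝ) := by
        have h1 : ((A - 2*ka : ℤ):ℝ) = 2*(Y:ℝ) := by exact_mod_cast congrArg (Int.cast : ℤ → ℝ) hY
        push_cast at h1
        rw [hA4, ha] at h1; linarith
      have hzZ : z = (Z:ℝ) := by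
        have h1 : ((A - 2*ka + 2*kc : ℤ):ℝ) = 4*(Z:ℝ) := by
          exact_mod_cast congrArg (Int.cast : ℤ → ℝ) hZ
        push_cast at h1
        rw [hA4, ha, hc] at h1; linarith
      have hrz : r = X • r₁ + Y • r₂ + Z • r₃ := by
        rw [hr, hxX, hyY, hzZ, Int.cast_smul_eq_zsmul, Int.cast_smul_eq_zsmul,
          Int.cast_smul_eq_zsmul]
      rw [SetLike.mem_coe, hrz]
      have m1 : r₁ ∈ ({r₁, r₂, r₃} : Set (EuclideanSpace ℝ (Fin n))) := by simp
      have m2 : r₂ ∈ ({r₁, r₂, r₃} : Set (EuclideanSpace ℝ (Fin n))) := by simp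
      have m3 : r₃ ∈ ({r₁, r₂, r₃} : Set (EuclideanSpace ℝ (Fin n))) := by simp
      exact Submodule.add_mem _
        (Submodule.add_mem _
          (Submodule.smul_mem _ X (Submodule.subset_span m1))
          (Submodule.smul_mem _ Y (Submodule.subset_span m2)))
        (Submodule.smul_mem _ Z (Submodule.subset_span m3))
    · -- half-integral case: contradiction with hnot
      exfalso
      apply hnot
      obtain ⟨X, hX⟩ : ∃ X, A = 4*X + 2 := ⟨(A - 2)/4, by omega⟩
      obtain ⟨Y, hY⟩ : ∃ Y, A - 2*ka = 2*Y := ⟨(A - 2*ka)/2, by omega⟩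
      obtain ⟨Z, hZ⟩ : ∃ Z, A - 2*ka + 2*kc = 4*Z + 2 := ⟨(A - 2*ka + 2*kc - 2)/4, by omega⟩
      have hxX : x = (X:ℝ) + 1/2 := by
        have h1 : (A:ℝ) = 4*(X:ℝ) + 2 := by exact_mod_cast congrArg (Int.cast : ℤ → ℝ) hX
        rw [hA4] at h1; linarith
      have hyY : y = (Y:ℝ) := by
        have h1 : ((A - 2*ka : ℤ):ℝ) = 2*(Y:ℝ) := by exact_mod_cast congrArg (Int.cast : ℤ → ℝ) hY
        push_cast at h1
        rw [hA4, ha] at h1; linarith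
      have hzZ : z = (Z:ℝ) + 1/2 := by
        have h1 : ((A - 2*ka + 2*kc : ℤ):ℝ) = 4*(Z:ℝ) + 2 := by
          exact_mod_cast congrArg (Int.cast : ℤ → ℝ) hZ
        push_cast at h1
        rw [hA4, ha, hc] at h1; linarith
      have hω : (1/2 : ℝ) • (r₁ + (2 : ℝ) • r₂ + r₃)
          = r - ((X:ℝ) • r₁ + ((Y:ℝ) - 1) • r₂ + (Z:ℝ) • r₃) := by
        rw [hr, hxX, hyY, hzZ]
        module
      have hcoord : ∀ i, ∃ k : ℤ, ((1/2 : ℝ) • (r₁ + (2 : ℝ) • r₂ + r₃)) i = k := by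
        intro i
        obtain ⟨k0, hk0⟩ := bn_intCoord hrB i
        obtain ⟨k1, hk1⟩ := bn_intCoord h₁ i
        obtain ⟨k2, hk2⟩ := bn_intCoord h₂ i
        obtain ⟨k3, hk3⟩ := bn_intCoord h₃ i
        refine ⟨k0 - (X*k1 + (Y-1)*k2 + Z*k3), ?_⟩
        have hval : ((1/2 : ℝ) • (r₁ + (2 : ℝ) • r₂ + r₃)) i
            = r i - ((X:ℝ)*(r₁ i) + ((Y:ℝ) - 1)*(r₂ i) + (Z:ℝ)*(r₃ i)) := by
          rw [hω]; rfl
        rw [hval, hk0, hk1, hk2, hk3]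
        push_cast
        ring
      have hnorm : ⟪(1/2 : ℝ) • (r₁ + (2 : ℝ) • r₂ + r₃),
          (1/2 : ℝ) • (r₁ + (2 : ℝ) • r₂ + r₃)⟫ = 1 := by
        simp only [inner_add_left, inner_add_right, real_inner_smul_left, real_inner_smul_right]
        rw [hl₁, hl₂, hl₃, hg12, hg23, h₁₃, c21, c32, c31]
        norm_num
      obtain ⟨m, hm⟩ := int_unit hcoord hnorm
      rcases hm with hm | hm
      · exact Or.inr ⟨m, Or.inl hm⟩
      · exact Or.inr ⟨m, Or.inr hm⟩
end
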